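/- Let X_1, X_2, … be i.i.d. real random variables whose common logarithmic moment generating function Λ(t) = log E[exp(t X_1)] is finite for all t ∈ ℝ, with Cramér rate function I(x) = sup_{t ∈ ℝ} (t x − Λ(t)). Then for every x < E[X_1] and every n ≥ 1, P(X_1 + ⋯ + X_n ≤ n x) ≤ exp(−n I(x)). -/

import Mathlib

open MeasureTheory ProbabilityTheory
open scoped ENNReal

/-- The Cramér rate function `I(x) = ⨆ t, (t x - Λ(t))`, as a function `ℝ → [0, ∞] ⊆ EReal`,
where `Λ = cgf X μ` is the logarithmic moment generating function `t ↦ log E[exp (t X)]`. -/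
noncomputable def cramerRate {Ω : Type*} [MeasurableSpace Ω] (X : Ω → ℝ) (μ : Measure Ω)
    (x : ℝ) : EReal :=
  ⨆ t : ℝ, ((t * x - cgf X μ t : ℝ) : EReal)

/-- Lower-tail Chernoff bound: if `X 0, X 1, …` are i.i.d. real random variables whose common
logarithmic moment generating function is finite everywhere, then for every `x < E[X 0]` and
every `n ≥ 1`, `P(X 0 + ⋯ + X (n-1) ≤ n x) ≤ exp (- n I x)`, where `I` is the Cramér rate
function. -/
theorem measure_sum_le_le_exp_neg_rate {Ω : Type*} [MeasurableSpace Ω]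
    (μ : Measure Ω) [IsProbabilityMeasure μ] (X : ℕ → Ω → ℝ)
    (hmeas : ∀ i, Measurable (X i))
    (hindep : iIndepFun X μ)
    (hident : ∀ i, IdentDistrib (X i) (X 0) μ μ)
    (hfin : ∀ t : ℝ, Integrable (fun ω => Real.exp (t * X 0 ω)) μ)
    (x : ℝ) (hx : x < μ[X 0]) (n : ℕ) (hn : 1 ≤ n) :
    μ {ω | ∑ i ∈ Finset.range n, X i ω ≤ (n : ℝ) * x} ≤
      EReal.exp (-(((n : ℝ) : EReal) * cramerRate (X 0) μ x)) := by
  set A : Set Ω := {ω | ∑ i ∈ Finset.range n, X i ω ≤ (n : ℝ) * x} with hA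
  -- integrability of X 0
  have hXint : Integrable (X 0) μ := by
    refine ((hfin 1).add (hfin (-1))).mono ((hmeas 0).aestronglyMeasurable) ?_
    filter_upwards with ω
    simp only [Real.norm_eq_abs, one_mul, neg_one_mul]
    calc |X 0 ω| ≤ Real.exp (X 0 ω) + Real.exp (-X 0 ω) := by
          rcases abs_cases (X 0 ω) with ⟨h, _⟩ | ⟨h, _⟩
          · nlinarith [Real.add_one_le_exp (X 0 ω), Real.exp_nonneg (-X 0 ω)]
          · nlinarith [Real.add_one_le_exp (-X 0 ω), Real.exp_nonneg (X 0 ω)]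
      _ ≤ |Real.exp (X 0 ω) + Real.exp (-X 0 ω)| := le_abs_self _
  -- key pointwise (in t) bound
  have key : ∀ t : ℝ, μ A ≤ ENNReal.ofReal
      (Real.exp ((n : ℝ) * cgf (X 0) μ t - (n : ℝ) * (t * x))) := by
    intro t
    rcases le_total 0 t with ht | ht
    · -- t ≥ 0 : use Jensen to show the exponent is nonnegative
      have hjensen : Real.exp (∫ ω, t * X 0 ω ∂μ) ≤ ∫ ω, Real.exp (t * X 0 ω) ∂μ := by
        have := convexOn_exp.map_integral_le (Real.continuous_exp.continuousOn)
          isClosed_univ (Filter.Eventually.of_forall fun ω => Set.mem_univ _)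
          (hXint.const_mul t) ?_
        · exact this
        · exact (hfin t).congr (by filter_upwards with ω using rfl)
      have hmean : t * x ≤ ∫ ω, t * X 0 ω ∂μ := by
        rw [integral_const_mul]
        exact mul_le_mul_of_nonneg_left hx.le ht
      have hcgf : t * x ≤ cgf (X 0) μ t := by
        have h1 : Real.exp (t * x) ≤ mgf (X 0) μ t :=
          le_trans (Real.exp_le_exp.mpr hmean) hjensen
        have h2 := Real.log_le_log (Real.exp_pos _) h1
        rwa [Real.log_exp] at h2
      have hexp : (0 : ℝ) ≤ (n : ℝ) * cgf (X 0) μ t - (n : ℝ) * (t * x) := by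
        have hn0 : (0 : ℝ) ≤ (n : ℝ) := Nat.cast_nonneg n
        nlinarith
      calc μ A ≤ 1 := prob_le_one
        _ ≤ ENNReal.ofReal (Real.exp ((n : ℝ) * cgf (X 0) μ t - (n : ℝ) * (t * x))) :=
          ENNReal.one_le_ofReal.mpr (Real.one_le_exp hexp)
    · -- t ≤ 0 : Chernoff bound
      have hint : ∀ i ∈ Finset.range n, Integrable (fun ω => Real.exp (t * X i ω)) μ := by
        intro i _
        have h := (hident i).comp (Real.measurable_exp.comp (measurable_const_mul t))
        exact h.integrable_iff.mpr (hfin t)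
      have hScgf : cgf (∑ i ∈ Finset.range n, X i) μ t = (n : ℝ) * cgf (X 0) μ t := by
        rw [hindep.cgf_sum hmeas hint]
        have : ∀ i ∈ Finset.range n, cgf (X i) μ t = cgf (X 0) μ t := by
          intro i _
          unfold cgf mgf
          congr 1
          exact ((hident i).comp (Real.measurable_exp.comp (measurable_const_mul t))).integral_eq
        rw [Finset.sum_congr rfl this, Finset.sum_const, Finset.card_range, nsmul_eq_mul]
      have hSint : Integrable (fun ω => Real.exp (t * (∑ i ∈ Finset.range n, X i) ω)) μ :=
        hindep.integrable_exp_mul_sum hmeas hint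
      have hbound := measure_le_le_exp_cgf (μ := μ) (X := ∑ i ∈ Finset.range n, X i)
        ((n : ℝ) * x) ht hSint
      rw [hScgf] at hbound
      have hAeq : {ω | (∑ i ∈ Finset.range n, X i) ω ≤ (n : ℝ) * x} = A := by
        ext ω; simp [hA, Finset.sum_apply]
      rw [hAeq] at hbound
      have : μ A = ENNReal.ofReal (μ A).toReal := (ENNReal.ofReal_toReal (measure_ne_top μ A)).symm
      rw [this]
      refine le_trans (ENNReal.ofReal_le_ofReal hbound) (ENNReal.ofReal_le_ofReal ?_)
      apply Real.exp_le_exp.mpr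
      ring_nf
      exact le_refl _
  -- positivity of n as an EReal
  have hn0 : (0 : EReal) < ((n : ℝ) : EReal) := by
    rw [← EReal.coe_zero, EReal.coe_lt_coe_iff]
    exact_mod_cast hn
  have hntop : ((n : ℝ) : EReal) ≠ ⊤ := EReal.coe_ne_top _
  rw [← ENNReal.log_le_log_iff, EReal.log_exp]
  refine EReal.le_neg_of_le_neg ?_
  rw [mul_comm, ← EReal.le_div_iff_mul_le hn0 hntop]
  refine iSup_le fun t => ?_
  rw [EReal.le_div_iff_mul_le hn0 hntop]
  refine EReal.le_neg_of_le_neg ?_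
  rw [← EReal.coe_mul, ← EReal.coe_neg,
    show -((t * x - cgf (X 0) μ t) * (n : ℝ)) =
      (n : ℝ) * cgf (X 0) μ t - (n : ℝ) * (t * x) by ring,
    ← EReal.log_exp (((n : ℝ) * cgf (X 0) μ t - (n : ℝ) * (t * x) : ℝ) : EReal),
    EReal.exp_coe]
  exact ENNReal.log_le_log_iff.mpr (key t)
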